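/- arXiv:2406.01823 — 2 statements merged into one kernel-verified Lean document; each statement's English description precedes it below -/
import Mathlib

section
/- Let G be a finite DAG, S ⊆ V a prefix subset, and v ∈ src(S̄). For any w ∈ S̄, either v and w are d-separated given S, or w is a descendant of v (w ∈ Des[v], including w = v). -/
open Relation

/-- Undirected adjacency induced by a directed edge relation. -/
def Adjacent {V : Type*} (E : V → V → Prop) (a b : V) : Prop := E a b ∨ E b a

/-- `x` is a collider on the path (vertex list) `p`: both neighboring edges point into `x`. -/
def IsCollider {V : Type*} (E : V → V → Prop) (p : List V) (x : V) : Prop :=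
  ∃ l1 a b l2, p = l1 ++ a :: x :: b :: l2 ∧ E a x ∧ E b x

/-- A path (vertex list) is active given a conditioning set `C`:
every collider is in `C` or has a descendant in `C`, and no non-collider is in `C`. -/
def ActivePath {V : Type*} (E : V → V → Prop) (C : Set V) (p : List V) : Prop :=
  (∀ x ∈ p, IsCollider E p x → ∃ d, ReflTransGen E x d ∧ d ∈ C) ∧
  (∀ x ∈ p, ¬ IsCollider E p x → x ∉ C)

/-- `p` is a path between `u` and `v`: consecutively adjacent, distinct vertices. -/
def IsPathBetween {V : Type*} (E : V → V → Prop) (u v : V) (p : List V) : Prop :=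
  p.Chain' (Adjacent E) ∧ p.Nodup ∧ p.head? = some u ∧ p.getLast? = some v

/-- `u` and `v` are d-connected given `C`. -/
def DConn {V : Type*} (E : V → V → Prop) (C : Set V) (u v : V) : Prop :=
  ∃ p, IsPathBetween E u v p ∧ ActivePath E C p

/-- `u` and `v` are d-separated given `C`. -/
def DSep {V : Type*} (E : V → V → Prop) (C : Set V) (u v : V) : Prop :=
  ¬ DConn E C u v

/-- `S` is a prefix (ancestrally closed) subset. -/
def IsPrefixSet {V : Type*} (E : V → V → Prop) (S : Set V) : Prop :=
  ∀ u v, E u v → v ∈ S → u ∈ S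

/-- Source vertices of the induced subgraph on `T`: vertices of `T` with no parent in `T`. -/
def srcOf {V : Type*} (E : V → V → Prop) (T : Set V) : Set V :=
  {v | v ∈ T ∧ ∀ u, E u v → u ∉ T}

/-- The edge relation is acyclic. -/
def Acyclic {V : Type*} (E : V → V → Prop) : Prop :=
  ∀ v, ¬ TransGen E v v

/-- `p` is a directed path from `u` to `v` (all edges forward). -/
def DirPath {V : Type*} (E : V → V → Prop) (u v : V) (p : List V) : Prop :=
  p.Chain' E ∧ p.head? = some u ∧ p.getLast? = some v

lemma split_unique {V : Type*} : ∀ (l1 l1' : List V) {l2 l2' : List V} {x : V},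
    x ∉ l1 → x ∉ l1' → l1 ++ x :: l2 = l1' ++ x :: l2' → l1 = l1' ∧ l2 = l2'
  | [], [], _, _, _, _, _, h => by simpa using h
  | [], y :: t, _, _, x, h1, h2, h => by
      simp at h; exact absurd (by simp [h.1]) h2
  | y :: t, [], _, _, x, h1, h2, h => by
      simp at h; exact absurd (by simp [h.1]) h1
  | y :: t, y' :: t', l2, l2', x, h1, h2, h => by
      simp only [List.cons_append, List.cons.injEq] at h
      obtain ⟨rfl, h⟩ := h
      have := split_unique t t' (fun hx => h1 (List.mem_cons_of_mem _ hx))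
        (fun hx => h2 (List.mem_cons_of_mem _ hx)) h
      exact ⟨by rw [this.1], this.2⟩

lemma chain'_rtg {V : Type*} (E : V → V → Prop) :
    ∀ (p : List V) (u w : V), p.Chain' E → p.head? = some u → p.getLast? = some w →
      ReflTransGen E u w
  | [], _, _, _, h, _ => by simp at h
  | [x], u, w, _, hh, hl => by
      simp at hh hl; subst hh; subst hl; exact ReflTransGen.refl
  | x :: y :: t, u, w, hc, hh, hl => by
      simp at hh; subst hh
      unfold List.Chain' at hc; rw [List.isChain_cons_cons] at hc
      have hl' : (y :: t).getLast? = some w := by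
        rw [← hl]; simp [List.getLast?_cons_cons]
      exact ReflTransGen.head hc.1 (chain'_rtg E (y :: t) y w hc.2 rfl hl')

lemma prefix_closed {V : Type*} {E : V → V → Prop} {S : Set V} (hS : IsPrefixSet E S)
    {a d : V} (h : ReflTransGen E a d) (hd : d ∈ S) : a ∈ S := by
  induction h using ReflTransGen.head_induction_on with
  | refl => exact hd
  | head hab _ ih => exact hS _ _ hab ih

lemma forward_chain {V : Type*} (E : V → V → Prop) (hacyc : Acyclic E) (S : Set V)
    (hS : IsPrefixSet E S) (v : V) (hv : v ∈ srcOf E Sᶜ) (p : List V)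
    (hch : p.Chain' (Adjacent E)) (hnd : p.Nodup) (hact : ActivePath E S p) :
    ∀ l2 l1 a, p = l1 ++ a :: l2 → (l1 ++ [a]).head? = some v →
      (l1 ++ [a]).Chain' E → p.Chain' E
  | [], l1, a, hp, _, hc => by rw [hp]; exact hc
  | b :: l2', l1, a, hp, hhd, hc => by
      -- first show E a b
      have hadj : Adjacent E a b := by
        have := hch
        rw [hp] at this; unfold List.Chain' at this; rw [List.isChain_append] at this
        exact (List.isChain_cons_cons.mp this.2.1).1
      have hab : E a b := by
        rcases hadj with hab | hba
        · exact hab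
        -- backward edge E b a : derive contradiction
        exfalso
        rcases List.eq_nil_or_concat l1 with rfl | ⟨l0, c, rfl⟩
        · -- a = v
          simp at hhd; subst hhd
          -- b ∈ S
          have hbS : b ∈ S := by
            have := hv.2 b hba
            simpa using this
          have hbmem : b ∈ p := by rw [hp]; simp
          by_cases hcol : IsCollider E p b
          · obtain ⟨m1, a', b', m2, heq, hab', _⟩ := hcol
            have hbv : b ≠ a := by
              rintro rfl; exact hacyc b (TransGen.single hba)
            have hnotin1 : b ∉ ([a] : List V) := by simp [hbv]
            have hnotin2 : b ∉ m1 ++ [a'] := by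
              have := hnd
              rw [heq] at this
              have : (m1 ++ [a'] ++ b :: b' :: m2).Nodup := by
                simpa using this
              intro hmem
              exact (List.nodup_append'.mp this).2.2 hmem (by simp)
            have heq2 : ([a] : List V) ++ b :: l2' = (m1 ++ [a']) ++ b :: (b' :: m2) := by
              simpa using hp.symm.trans heq
            obtain ⟨h1, _⟩ := split_unique [a] (m1 ++ [a']) hnotin1 hnotin2 heq2
            have hav : a' = a := by
              cases l0' : m1 with
              | nil => rw [l0'] at h1; simpa using h1.symm
              | cons y t =>
                  rw [l0'] at h1
                  exact absurd h1 (by simp)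
            subst hav
            exact hacyc a' (TransGen.head hab' (TransGen.single hba))
          · exact (hact.2 b hbmem hcol) hbS
        · -- l1 = l0 ++ [c], a is a collider
          simp only [List.concat_eq_append] at hp hhd hc
          have hca : E c a := by
            have h3 := (List.isChain_append.mp hc).2.2
            exact h3 c (by simp) a rfl
          have hcol : IsCollider E p a :=
            ⟨l0, c, b, l2', by rw [hp]; simp, hca, hba⟩
          have hamem : a ∈ p := by rw [hp]; simp
          obtain ⟨d, hd1, hd2⟩ := hact.1 a hamem hcol
          have haS : a ∈ S := prefix_closed hS hd1 hd2
          have hva : ReflTransGen E v a :=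
            chain'_rtg E (l0 ++ [c] ++ [a]) v a hc hhd (by simp)
          exact hv.1 (prefix_closed hS hva haS)
      -- now extend
      have hp' : p = (l1 ++ [a]) ++ b :: l2' := by rw [hp]; simp
      have hhd' : ((l1 ++ [a]) ++ [b]).head? = some v := by
        rw [List.head?_append]
        rw [hhd]; rfl
      have hc' : ((l1 ++ [a]) ++ [b]).Chain' E := by
        unfold List.Chain'; rw [List.isChain_append]
        exact ⟨hc, List.isChain_singleton b, fun x hx y hy => by
          simp at hx hy; subst hx; subst hy; exact hab⟩
      exact forward_chain E hacyc S hS v hv p hch hnd hact l2' (l1 ++ [a]) b hp' hhd' hc'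

/-- for `v ∈ src(S̄)` and `w ∈ S̄`, either `v ⫫ w ∣ S` or `w ∈ Des[v]`. -/
theorem source_dsep_or_descendant {V : Type*} [Fintype V] (E : V → V → Prop)
    (hacyc : Acyclic E) (S : Set V) (hS : IsPrefixSet E S)
    (v : V) (hv : v ∈ srcOf E Sᶜ) (w : V) (hw : w ∉ S) :
    DSep E S v w ∨ ReflTransGen E v w := by
  rcases Classical.em (DConn E S v w) with hc | hc
  · obtain ⟨p, ⟨hch, hnd, hhd, hlast⟩, hact⟩ := hc
    right
    obtain ⟨t, rfl⟩ : ∃ t, p = v :: t := by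
      cases p with
      | nil => simp at hhd
      | cons x t => simp at hhd; exact ⟨t, by rw [hhd]⟩
    have hchE : (v :: t).Chain' E :=
      forward_chain E hacyc S hS v hv (v :: t) hch hnd hact t [] v rfl rfl
        (List.isChain_singleton v)
    exact chain'_rtg E (v :: t) v w hchE rfl hlast
  · exact Or.inl hc
end

section
/- Let G be a finite DAG, S ⊆ V a prefix subset, and let w, w' ∈ S̄ each have exactly one ancestor-or-self in src(S̄), say Anc[w] ∩ src(S̄) = {s} and Anc[w'] ∩ src(S̄) = {s'}. Then w and w' are d-connected given S if and only if s = s'. -/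
open Relation

section Aux
variable {V : Type*} {E : V → V → Prop}

lemma rtg_mem_of_prefix {S : Set V} (hS : IsPrefixSet E S) {a b : V}
    (h : ReflTransGen E a b) (hb : b ∈ S) : a ∈ S := by
  induction h with
  | refl => exact hb
  | tail h1 h2 ih => exact ih (hS _ _ h2 hb)

lemma chain'_rtg_of_mem : ∀ {p : List V} {a x : V}, p.Chain' E → p.head? = some a →
    x ∈ p → ReflTransGen E a x := by
  intro p
  induction p with
  | nil => intro a x _ _ hx; simp at hx
  | cons b l ih =>
    intro a x hc hh hx
    simp only [List.head?_cons, Option.some.injEq] at hh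
    subst hh
    rcases List.mem_cons.1 hx with rfl | hx
    · exact .refl
    · cases l with
      | nil => simp at hx
      | cons c l' =>
        rw [List.Chain', List.isChain_cons_cons] at hc
        exact ReflTransGen.head hc.1 (ih hc.2 rfl hx)

lemma chain'_tg : ∀ {l : List V} {b x : V}, (b :: l).Chain' E → x ∈ l → TransGen E b x := by
  intro l
  induction l with
  | nil => intro b x _ hx; simp at hx
  | cons c l' ih =>
    intro b x hc hx
    rw [List.Chain', List.isChain_cons_cons] at hc
    rcases List.mem_cons.1 hx with rfl | hx
    · exact .single hc.1
    · exact TransGen.head hc.1 (ih hc.2 hx)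

lemma nodup_of_chain' (hacyc : Acyclic E) : ∀ {p : List V}, p.Chain' E → p.Nodup := by
  intro p hc
  induction p with
  | nil => exact List.nodup_nil
  | cons b l ih =>
    exact List.nodup_cons.2 ⟨fun hb => hacyc b (chain'_tg hc hb), ih hc.tail⟩

lemma no_collider_of_chain' (hacyc : Acyclic E) {p : List V} (hc : p.Chain' E) (x : V) :
    ¬ IsCollider E p x := by
  rintro ⟨l1, a, b, l2, rfl, hax, hbx⟩
  have h2 : (a :: x :: b :: l2).Chain' E := (List.isChain_append.1 hc).2.1
  have hxb : E x b := ((List.isChain_cons_cons.1 (List.isChain_cons_cons.1 h2).2)).1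
  exact hacyc x (TransGen.head hxb (.single hbx))

lemma isCollider_cons {p : List V} {x c : V} (h : IsCollider E p x) : IsCollider E (c :: p) x := by
  obtain ⟨l1, a, b, l2, rfl, hax, hbx⟩ := h
  exact ⟨c :: l1, a, b, l2, rfl, hax, hbx⟩

lemma nodup_unique_split : ∀ {l1 l2 r1 r2 : List V} {x : V},
    (l1 ++ x :: r1).Nodup → l1 ++ x :: r1 = l2 ++ x :: r2 → r1 = r2 := by
  intro l1
  induction l1 with
  | nil =>
    intro l2 r1 r2 x hnd heq
    cases l2 with
    | nil => simpa using heq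
    | cons y l2' =>
      exfalso
      simp only [List.nil_append, List.cons_append, List.cons.injEq] at heq
      obtain ⟨rfl, heq2⟩ := heq
      have : x ∈ r1 := heq2 ▸ (by simp : x ∈ l2' ++ x :: r2)
      exact (List.nodup_cons.1 hnd).1 this
  | cons y l1' ih =>
    intro l2 r1 r2 x hnd heq
    cases l2 with
    | nil =>
      exfalso
      simp only [List.nil_append, List.cons_append, List.cons.injEq] at heq
      obtain ⟨rfl, heq2⟩ := heq
      exact (List.nodup_cons.1 (by rwa [List.cons_append] at hnd)).1 (by simp)
    | cons z l2' =>
      simp only [List.cons_append, List.cons.injEq] at heq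
      exact ih (List.nodup_cons.1 (by rwa [List.cons_append] at hnd)).2 heq.2



lemma active_no_collider {S : Set V} (hacyc : Acyclic E) (hS : IsPrefixSet E S)
    {p : List V} (hnd : p.Nodup) (hact : ActivePath E S p) :
    ∀ x ∈ p, ¬ IsCollider E p x := by
  intro x hx hcol
  obtain ⟨l1, a, b, l2, hp, hax, hbx⟩ := hcol
  obtain ⟨d, hxd, hdS⟩ := hact.1 x hx ⟨l1, a, b, l2, hp, hax, hbx⟩
  have hxS : x ∈ S := rtg_mem_of_prefix hS hxd hdS
  have haS : a ∈ S := hS a x hax hxS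
  have haP : a ∈ p := by rw [hp]; simp
  have hanc : ¬ IsCollider E p a := by
    rintro ⟨m1, a2, b2, m2, hp2, _h1, hb2a⟩
    have heq : l1 ++ a :: (x :: b :: l2) = (m1 ++ [a2]) ++ a :: (b2 :: m2) := by
      rw [← hp, hp2]; simp
    have hnd' : (l1 ++ a :: (x :: b :: l2)).Nodup := hp ▸ hnd
    have h3 := nodup_unique_split hnd' heq
    obtain ⟨rfl, -⟩ := List.cons.inj h3.symm
    exact hacyc a (TransGen.head hax (.single hb2a))
  exact hact.2 a haP hanc haS

lemma chain_directed : ∀ {l : List V} {a b : V}, (a :: b :: l).Chain' (Adjacent E) → E a b →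
    (∀ x ∈ (a :: b :: l), ¬ IsCollider E (a :: b :: l) x) → (a :: b :: l).Chain' E := by
  intro l
  induction l with
  | nil => intro a b _ hab _; simp [List.Chain', List.isChain_cons_cons, hab]
  | cons c l' ih =>
    intro a b hc hab hnc
    rw [List.Chain', List.isChain_cons_cons] at hc
    have hbc : E b c := by
      rcases (List.isChain_cons_cons.1 hc.2).1 with h | h
      · exact h
      · exact absurd ⟨[], a, c, l', rfl, hab, h⟩ (hnc b (by simp))
    have htail := ih hc.2 hbc (fun x hx hcol => hnc x (List.mem_cons_of_mem a hx) (isCollider_cons hcol))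
    exact List.isChain_cons_cons.2 ⟨hab, htail⟩

lemma pivot : ∀ {p : List V} {w w' : V}, p.Chain' (Adjacent E) →
    (∀ x ∈ p, ¬ IsCollider E p x) → p.head? = some w → p.getLast? = some w' →
    ∃ t ∈ p, ReflTransGen E t w ∧ ReflTransGen E t w' := by
  intro p
  induction p with
  | nil => intro w w' _ _ h _; simp at h
  | cons u l ih =>
    intro w w' hc hnc hh hl
    simp only [List.head?_cons, Option.some.injEq] at hh; subst hh
    cases l with
    | nil =>
      simp only [List.getLast?_singleton, Option.some.injEq] at hl
      subst hl
      exact ⟨u, by simp, .refl, .refl⟩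
    | cons v l' =>
      rcases (List.isChain_cons_cons.1 hc).1 with hwv | hvw
      · have hdir : (u :: v :: l').Chain' E := chain_directed hc hwv hnc
        exact ⟨u, by simp, .refl, chain'_rtg_of_mem hdir rfl (List.mem_of_mem_getLast? hl)⟩
      · have hl' : (v :: l').getLast? = some w' := by
          rwa [List.getLast?_cons_cons] at hl
        obtain ⟨t, htm, htv, htw'⟩ := ih (List.isChain_cons_cons.1 hc).2
          (fun x hx hcol => hnc x (List.mem_cons_of_mem _ hx) (isCollider_cons hcol)) rfl hl'
        exact ⟨t, List.mem_cons_of_mem _ htm, htv.tail hvw, htw'⟩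

lemma exists_source_ancestor [Fintype V] (hacyc : Acyclic E) {S : Set V} {t : V} (ht : t ∉ S) :
    ∃ r, ReflTransGen E r t ∧ r ∈ srcOf E Sᶜ := by
  haveI : IsTrans V (TransGen E) := ⟨fun _ _ _ => TransGen.trans⟩
  haveI : IsIrrefl V (TransGen E) := ⟨hacyc⟩
  have hwf : WellFounded (TransGen E) := Finite.wellFounded_of_trans_of_irrefl _
  obtain ⟨r, ⟨hrS, hrt⟩, hmin⟩ := hwf.has_min {x | x ∉ S ∧ ReflTransGen E x t} ⟨t, ht, .refl⟩
  exact ⟨r, hrt, hrS, fun u hur hu => hmin u ⟨hu, hrt.head hur⟩ (.single hur)⟩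

lemma rtg_exists_chain {a b : V} (h : ReflTransGen E a b) :
    ∃ p : List V, p.Chain' E ∧ p.head? = some a ∧ p.getLast? = some b := by
  induction h with
  | refl => exact ⟨[a], List.isChain_singleton _, rfl, rfl⟩
  | @tail c d hac hcb ih =>
    obtain ⟨p, hc, hh, hl⟩ := ih
    refine ⟨p ++ [d], ?_, ?_, ?_⟩
    · exact List.isChain_append.2 ⟨hc, List.isChain_singleton _, by
        intro x hx y hy
        simp only [List.head?_cons, Option.mem_def, Option.some.injEq] at hy
        rw [hl] at hx
        simp only [Option.mem_def, Option.some.injEq] at hx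
        subst hx; subst hy; exact hcb⟩
    · cases p with
      | nil => simp at hh
      | cons q l => simpa using hh
    · simp [List.getLast?_concat]


lemma head?_append_ne_nil {l l' : List V} (h : l ≠ []) : (l ++ l').head? = l.head? := by
  cases l with
  | nil => exact absurd rfl h
  | cons a m => simp

lemma getLast?_cons_ne_nil {a : V} {l : List V} (h : l ≠ []) : (a :: l).getLast? = l.getLast? := by
  cases l with
  | nil => exact absurd rfl h
  | cons b m => rw [List.getLast?_cons_cons]

lemma trek_aux (hacyc : Acyclic E) :
    ∀ (n : ℕ) (P Q : List V) (t w w' : V), P.length ≤ n → P.Chain' E → Q.Chain' E →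
    P.head? = some t → Q.head? = some t → P.getLast? = some w → Q.getLast? = some w' →
    ∃ p : List V, p.Chain' (Adjacent E) ∧ p.Nodup ∧ p.head? = some w ∧ p.getLast? = some w' ∧
      (∀ x ∈ p, ¬ IsCollider E p x) ∧ (∀ x ∈ p, x ∈ P ∨ x ∈ Q) := by
  intro n
  induction n with
  | zero =>
    intro P Q t w w' hlen _ _ hhP _ _ _
    rw [List.length_eq_zero_iff.1 (Nat.le_zero.1 hlen)] at hhP
    simp at hhP
  | succ n ih =>
    intro P Q t w w' hlen hcP hcQ hhP hhQ hlP hlQ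
    by_cases hwQ : w ∈ Q
    · obtain ⟨l1, l2, rfl⟩ := List.append_of_mem hwQ
      refine ⟨w :: l2, ?_, ?_, rfl, ?_, ?_, fun x hx => Or.inr (by simp at hx ⊢; tauto)⟩
      · exact ((List.isChain_append.1 hcQ).2.1).imp (fun a b h => Or.inl h)
      · exact ((List.sublist_append_right l1 (w :: l2)).nodup (nodup_of_chain' hacyc hcQ))
      · rw [← hlQ, List.getLast?_append]
        cases h : (w :: l2).getLast? with
        | none => simp at h
        | some z => simp
      · exact fun x _ => no_collider_of_chain' hacyc (List.isChain_append.1 hcQ).2.1 x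
    · have hPne : P ≠ [] := fun h => by rw [h] at hhP; simp at hhP
      have htQ : t ∈ Q := List.mem_of_mem_head? (by rw [hhQ]; rfl)
      have hne : w ≠ t := fun h => hwQ (h ▸ htQ)
      have hPl : P.getLast hPne = w := by
        have := List.getLast?_eq_getLast hPne
        rw [hlP] at this; exact (Option.some.inj this).symm
      obtain ⟨P0, rfl⟩ : ∃ P0, P = P0 ++ [w] :=
        ⟨P.dropLast, by rw [← hPl]; exact (List.dropLast_append_getLast hPne).symm⟩
      have hP0ne : P0 ≠ [] := by
        intro h
        rw [h, List.nil_append] at hhP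
        simp at hhP
        exact hne hhP
      have hhP0 : P0.head? = some t := by rw [← hhP, head?_append_ne_nil hP0ne]
      have hcP0 : P0.Chain' E := (List.isChain_append.1 hcP).1
      obtain ⟨v, hv⟩ : ∃ v, P0.getLast? = some v := by
        cases h : P0.getLast? with
        | none => exact absurd (List.getLast?_eq_none_iff.1 h) hP0ne
        | some z => exact ⟨z, rfl⟩
      have hEvw : E v w := (List.isChain_append.1 hcP).2.2 v (by rw [hv]; rfl) w rfl
      have hlen0 : P0.length ≤ n := by
        have : (P0 ++ [w]).length = P0.length + 1 := by simp
        omega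
      obtain ⟨p0, hc0, hnd0, hh0, hl0, hnc0, hmem0⟩ := ih P0 Q t v w' hlen0 hcP0 hcQ hhP0 hhQ hv hlQ
      have hp0ne : p0 ≠ [] := fun h => by rw [h] at hh0; simp at hh0
      have hwp0 : w ∉ p0 := by
        intro h
        rcases hmem0 w h with h1 | h1
        · have hnp : (P0 ++ [w]).Nodup := nodup_of_chain' hacyc hcP
          exact (List.disjoint_of_nodup_append hnp) h1 (List.mem_singleton_self w)
        · exact hwQ h1
      refine ⟨w :: p0, ?_, List.nodup_cons.2 ⟨hwp0, hnd0⟩, rfl, ?_, ?_, ?_⟩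
      · refine List.isChain_cons.2 ⟨?_, hc0⟩
        intro y hy
        rw [hh0] at hy
        cases hy
        exact Or.inr hEvw
      · rw [getLast?_cons_ne_nil hp0ne]; exact hl0
      · rintro x hx ⟨l1, a, b, l2, heq, hax, hbx⟩
        cases l1 with
        | nil =>
          simp only [List.nil_append, List.cons.injEq] at heq
          obtain ⟨rfl, heq2⟩ := heq
          have hxv : x = v := by
            rw [heq2] at hh0; exact Option.some.inj hh0
          subst hxv
          exact hacyc w (TransGen.head hax (.single hEvw))
        | cons c l1' =>
          simp only [List.cons_append, List.cons.injEq] at heq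
          obtain ⟨rfl, heq2⟩ := heq
          have hxp0 : x ∈ p0 := by rw [heq2]; simp
          exact hnc0 x hxp0 ⟨l1', a, b, l2, heq2, hax, hbx⟩
      · intro x hx
        rcases List.mem_cons.1 hx with rfl | hx
        · exact Or.inl (by simp)
        · rcases hmem0 x hx with h1 | h1
          · exact Or.inl (List.mem_append_left _ h1)
          · exact Or.inr h1

end Aux

/-- if `w, w' ∈ S̄` have unique source-ancestors `s`, `s'` respectively,
then `w` and `w'` are d-connected given `S` iff `s = s'`. -/
theorem dconn_iff_same_source_ancestor {V : Type*} [Fintype V] (E : V → V → Prop)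
    (hacyc : Acyclic E) (S : Set V) (hS : IsPrefixSet E S)
    (w w' s s' : V) (hw : w ∉ S) (hw' : w' ∉ S)
    (hs : {x | ReflTransGen E x w ∧ x ∈ srcOf E Sᶜ} = {s})
    (hs' : {x | ReflTransGen E x w' ∧ x ∈ srcOf E Sᶜ} = {s'}) :
    DConn E S w w' ↔ s = s' := by
  constructor
  · rintro ⟨p, ⟨hc, hnd, hh, hl⟩, hact⟩
    have hnc : ∀ x ∈ p, ¬ IsCollider E p x := active_no_collider hacyc hS hnd hact
    obtain ⟨t, htm, htw, htw'⟩ := pivot hc hnc hh hl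
    have htS : t ∉ S := hact.2 t htm (hnc t htm)
    obtain ⟨r, hrt, hrsrc⟩ := exists_source_ancestor hacyc htS
    have h1 : r ∈ ({s} : Set V) := hs ▸ (⟨hrt.trans htw, hrsrc⟩ : r ∈ {x | ReflTransGen E x w ∧ x ∈ srcOf E Sᶜ})
    have h2 : r ∈ ({s'} : Set V) := hs' ▸ (⟨hrt.trans htw', hrsrc⟩ : r ∈ {x | ReflTransGen E x w' ∧ x ∈ srcOf E Sᶜ})
    rw [Set.mem_singleton_iff] at h1 h2
    rw [← h1, ← h2]
  · intro hss
    have hsmem : s ∈ {x | ReflTransGen E x w ∧ x ∈ srcOf E Sᶜ} := by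
      rw [hs]; rfl
    have hsmem' : s ∈ {x | ReflTransGen E x w' ∧ x ∈ srcOf E Sᶜ} := by
      rw [hs', hss]; rfl
    obtain ⟨hsw, hsS, -⟩ := hsmem
    obtain ⟨hsw', -⟩ := hsmem'
    obtain ⟨P, hcP, hhP, hlP⟩ := rtg_exists_chain hsw
    obtain ⟨Q, hcQ, hhQ, hlQ⟩ := rtg_exists_chain hsw'
    obtain ⟨p, hc, hnd, hh, hl, hnc, hmem⟩ :=
      trek_aux hacyc P.length P Q s w w' le_rfl hcP hcQ hhP hhQ hlP hlQ
    refine ⟨p, ⟨hc, hnd, hh, hl⟩, ?_, ?_⟩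
    · intro x hx hcol
      exact absurd hcol (hnc x hx)
    · intro x hx _ hxS
      have hsx : ReflTransGen E s x := by
        rcases hmem x hx with h1 | h1
        · exact chain'_rtg_of_mem hcP hhP h1
        · exact chain'_rtg_of_mem hcQ hhQ h1
      exact hsS (rtg_mem_of_prefix hS hsx hxS)
end
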